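/- Let s > 0 and let (η_ℓ)_{ℓ∈ℕ}, (N_ℓ)_{ℓ∈ℕ} be sequences with η_ℓ > 0 and N_ℓ ∈ ℕ. Suppose: (i) #M_ℓ ≤ C_4·η_ℓ^{−1/s} for constants C_4 > 0 and all ℓ ≥ ℓ₀, (ii) the mesh-closure estimate N_ℓ − N_{ℓ₀} + 1 ≤ C_mesh·∑_{j=ℓ₀}^{ℓ} #M_j with C_mesh ≥ 1, and (iii) linear convergence η_ℓ ≤ C_lin·q_lin^{ℓ−j}·η_j for all ℓ₀ ≤ j ≤ ℓ with 0 < q_lin < 1. Then there exists C > 0 (depending only on C_4, C_mesh, C_lin, q_lin, s) such that η_ℓ ≤ C·(N_ℓ − N_{ℓ₀} + 1)^{−s} for all ℓ ≥ ℓ₀. -/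

import Mathlib

open Finset

lemma geom_icc_le (a : ℝ) (ha0 : 0 ≤ a) (ha1 : a < 1) (ℓ₀ : ℕ) :
    ∀ ℓ, ℓ₀ ≤ ℓ → ∑ j ∈ Icc ℓ₀ ℓ, a ^ (ℓ - j) ≤ (1 - a)⁻¹ := by
  have h1a : 0 < 1 - a := by linarith
  intro ℓ hℓ
  induction ℓ, hℓ using Nat.le_induction with
  | base =>
    rw [Icc_self, sum_singleton, Nat.sub_self, pow_zero]
    rw [le_inv_comm₀ one_pos h1a]
    · linarith
  | succ n hn ih =>
    rw [Finset.sum_Icc_succ_top (by omega : ℓ₀ ≤ n + 1)]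
    have hsum : ∑ j ∈ Icc ℓ₀ n, a ^ (n + 1 - j) = a * ∑ j ∈ Icc ℓ₀ n, a ^ (n - j) := by
      rw [Finset.mul_sum]
      refine Finset.sum_congr rfl fun j hj => ?_
      simp only [mem_Icc] at hj
      rw [show n + 1 - j = (n - j) + 1 by omega, pow_succ, mul_comm]
    rw [hsum, Nat.sub_self, pow_zero]
    have := mul_le_mul_of_nonneg_left ih ha0
    have key : a * (1 - a)⁻¹ + 1 ≤ (1 - a)⁻¹ := by
      rw [← sub_nonneg]
      have : (1 - a)⁻¹ - (a * (1 - a)⁻¹ + 1) = 0 := by field_simp; ring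
      linarith
    linarith

/-- Combination of counting, mesh-closure, and linear-convergence estimates
(optimal convergence rates, Theorem 4.5). -/
theorem stmt19 (s C4 Cmesh Clin qlin : ℝ) (hs : 0 < s) (hC4 : 0 < C4)
    (hCmesh : 1 ≤ Cmesh) (hClin : 0 < Clin) (hq0 : 0 < qlin) (hq1 : qlin < 1)
    (η : ℕ → ℝ) (hη : ∀ ℓ, 0 < η ℓ)
    (Mk N : ℕ → ℕ) (ℓ₀ : ℕ)
    (hmark : ∀ ℓ, ℓ₀ ≤ ℓ → (Mk ℓ : ℝ) ≤ C4 * η ℓ ^ (-(1 / s)))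
    (hclosure : ∀ ℓ, ℓ₀ ≤ ℓ →
      ((N ℓ - N ℓ₀ + 1 : ℕ) : ℝ) ≤ Cmesh * ∑ j ∈ Icc ℓ₀ ℓ, (Mk j : ℝ))
    (hlin : ∀ j ℓ : ℕ, ℓ₀ ≤ j → j ≤ ℓ → η ℓ ≤ Clin * qlin ^ (ℓ - j) * η j) :
    ∃ C > 0, ∀ ℓ, ℓ₀ ≤ ℓ → η ℓ ≤ C * ((N ℓ - N ℓ₀ + 1 : ℕ) : ℝ) ^ (-s) := by
  set t := 1 / s with ht
  have hts : 0 < t := by positivity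
  set a := qlin ^ t with ha
  have ha0 : 0 < a := Real.rpow_pos_of_pos hq0 t
  have ha1 : a < 1 := Real.rpow_lt_one hq0.le hq1 hts
  have h1a : 0 < 1 - a := by linarith
  have hClt : 0 < Clin ^ t := Real.rpow_pos_of_pos hClin t
  set K := Cmesh * C4 * Clin ^ t * (1 - a)⁻¹ with hKdef
  have hK0 : 0 < K := by positivity
  refine ⟨K ^ s, Real.rpow_pos_of_pos hK0 s, fun ℓ hℓ => ?_⟩
  set X := ((N ℓ - N ℓ₀ + 1 : ℕ) : ℝ) with hXdef
  have hX : (0:ℝ) < X := by positivity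
  have hηℓ := hη ℓ
  -- key estimate : X ≤ K * η ℓ ^ (-t)
  have key : X ≤ K * η ℓ ^ (-t) := by
    have h2 : ∀ j ∈ Icc ℓ₀ ℓ, (Mk j : ℝ) ≤ C4 * (Clin ^ t * a ^ (ℓ - j)) * η ℓ ^ (-t) := by
      intro j hj
      simp only [mem_Icc] at hj
      have hηj := hη j
      have hstep : η ℓ ^ t ≤ Clin ^ t * a ^ (ℓ - j) * η j ^ t := by
        have h := Real.rpow_le_rpow (hηℓ).le (hlin j ℓ hj.1 hj.2) hts.le
        have hpow : (qlin ^ (ℓ - j)) ^ t = a ^ (ℓ - j) := by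
          rw [← Real.rpow_natCast qlin (ℓ - j), ← Real.rpow_mul hq0.le,
            mul_comm, Real.rpow_mul hq0.le, Real.rpow_natCast]
        rwa [Real.mul_rpow (by positivity) hηj.le,
          Real.mul_rpow hClin.le (by positivity), hpow] at h
      have hineq : (η j ^ t)⁻¹ ≤ Clin ^ t * a ^ (ℓ - j) * (η ℓ ^ t)⁻¹ := by
        have hA : 0 < η j ^ t := Real.rpow_pos_of_pos hηj t
        have hB : 0 < η ℓ ^ t := Real.rpow_pos_of_pos hηℓ t
        rw [show Clin ^ t * a ^ (ℓ - j) * (η ℓ ^ t)⁻¹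
            = Clin ^ t * a ^ (ℓ - j) / (η ℓ ^ t) by ring,
          inv_eq_one_div, div_le_div_iff₀ hA hB]
        nlinarith
      calc (Mk j : ℝ) ≤ C4 * η j ^ (-t) := hmark j hj.1
        _ ≤ C4 * (Clin ^ t * a ^ (ℓ - j) * η ℓ ^ (-t)) := by
            rw [Real.rpow_neg hηj.le, Real.rpow_neg hηℓ.le]
            exact mul_le_mul_of_nonneg_left hineq hC4.le
        _ = C4 * (Clin ^ t * a ^ (ℓ - j)) * η ℓ ^ (-t) := by ring
    have h3 : ∑ j ∈ Icc ℓ₀ ℓ, (Mk j : ℝ)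
        ≤ C4 * Clin ^ t * η ℓ ^ (-t) * ∑ j ∈ Icc ℓ₀ ℓ, a ^ (ℓ - j) := by
      rw [Finset.mul_sum]
      refine Finset.sum_le_sum fun j hj => (h2 j hj).trans_eq (by ring)
    have h4 : ∑ j ∈ Icc ℓ₀ ℓ, a ^ (ℓ - j) ≤ (1 - a)⁻¹ :=
      geom_icc_le a ha0.le ha1 ℓ₀ ℓ hℓ
    have hηt : 0 < η ℓ ^ (-t) := Real.rpow_pos_of_pos hηℓ _
    calc X ≤ Cmesh * ∑ j ∈ Icc ℓ₀ ℓ, (Mk j : ℝ) := hclosure ℓ hℓ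
      _ ≤ Cmesh * (C4 * Clin ^ t * η ℓ ^ (-t) * ∑ j ∈ Icc ℓ₀ ℓ, a ^ (ℓ - j)) := by
          exact mul_le_mul_of_nonneg_left h3 (by linarith)
      _ ≤ Cmesh * (C4 * Clin ^ t * η ℓ ^ (-t) * (1 - a)⁻¹) := by
          refine mul_le_mul_of_nonneg_left ?_ (by linarith)
          exact mul_le_mul_of_nonneg_left h4 (by positivity)
      _ = K * η ℓ ^ (-t) := by rw [hKdef]; ring
  -- raise to the power s
  have hts' : (-t) * s = -1 := by
    rw [ht, neg_mul, one_div_mul_cancel hs.ne']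
  have hpows : X ^ s ≤ K ^ s * (η ℓ)⁻¹ := by
    have h := Real.rpow_le_rpow hX.le key hs.le
    rwa [Real.mul_rpow hK0.le (Real.rpow_pos_of_pos hηℓ _).le,
      ← Real.rpow_mul hηℓ.le, hts', Real.rpow_neg_one] at h
  have hXs : 0 < X ^ s := Real.rpow_pos_of_pos hX s
  rw [Real.rpow_neg hX.le]
  rw [show K ^ s * (X ^ s)⁻¹ = K ^ s / X ^ s by ring, le_div_iff₀ hXs]
  have := mul_le_mul_of_nonneg_left hpows hηℓ.le
  calc η ℓ * X ^ s ≤ η ℓ * (K ^ s * (η ℓ)⁻¹) := this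
    _ = K ^ s := by field_simp
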